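/- Consider the system of n integral equations u_i(x,t) = u_{0,i}(γ_i(x,t,0)) + ∫₀ᵗ [ Σ_{k=1}^n f_{ik}(γ_i(x,t,τ),τ)·u_k(γ_i(x,t,τ),τ) + a_i(γ_i(x,t,τ),τ) ] dτ for continuous u = (u_1,…,u_n) on a compact domain of determinacy K_T, where γ_i(x,t,τ) ∈ K_τ whenever (x,t) ∈ K_T and 0 ≤ τ ≤ t ≤ T. Then sup_{(x,t)∈K_T} max_i |u_i(x,t)| ≤ [ T·sup_k sup_{K_T} |a_k| + sup_k sup_{K₀} |u_{0,k}| ] · exp( n · sup_{i,k} sup_{K_T} |f_{ik}| · T ). -/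

import Mathlib

open MeasureTheory Set

set_option maxHeartbeats 1000000 in
/-- A priori estimate for the system of integral equations along characteristics:
`sup_{K_T} max_i |u_i| ≤ (T·sup|a| + sup|u₀|) · exp(n · sup|f| · T)`. -/
theorem apriori_estimate_system (n : ℕ) (T A U₀ F : ℝ) (hT : 0 < T)
    (KT : Set (ℝ × ℝ)) (hKT : IsCompact KT)
    (hKTt : ∀ p ∈ KT, 0 ≤ p.2 ∧ p.2 ≤ T)
    (u : Fin n → ℝ × ℝ → ℝ) (u₀ : Fin n → ℝ → ℝ)
    (f : Fin n → Fin n → ℝ × ℝ → ℝ) (a : Fin n → ℝ × ℝ → ℝ)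
    (γ : Fin n → ℝ → ℝ → ℝ → ℝ)
    (hu : ∀ i, ContinuousOn (u i) KT)
    (hγ : ∀ i, ∀ x t τ : ℝ, (x, t) ∈ KT → 0 ≤ τ → τ ≤ t → (γ i x t τ, τ) ∈ KT)
    (hrepr : ∀ i, ∀ x t : ℝ, (x, t) ∈ KT →
      u i (x, t) = u₀ i (γ i x t 0) +
        ∫ τ in (0:ℝ)..t,
          ((∑ k : Fin n, f i k (γ i x t τ, τ) * u k (γ i x t τ, τ)) +
            a i (γ i x t τ, τ)))
    (hA : ∀ i, ∀ p ∈ KT, |a i p| ≤ A)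
    (hU₀ : ∀ i, ∀ y : ℝ, (y, (0:ℝ)) ∈ KT → |u₀ i y| ≤ U₀)
    (hF : ∀ i k, ∀ p ∈ KT, |f i k p| ≤ F) :
    ∀ i, ∀ p ∈ KT, |u i p| ≤ (T * A + U₀) * Real.exp (n * F * T) := by
  intro i p hp
  have hF0 : 0 ≤ F := (abs_nonneg _).trans (hF i i p hp)
  have hA0 : 0 ≤ A := (abs_nonneg _).trans (hA i p hp)
  have ht0 : 0 ≤ p.2 := (hKTt p hp).1
  have hU0 : 0 ≤ U₀ :=
    (abs_nonneg _).trans (hU₀ i (γ i p.1 p.2 0) (hγ i p.1 p.2 0 hp le_rfl ht0))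
  set K : ℝ := (n : ℝ) * F with hKdef
  have hK0 : 0 ≤ K := mul_nonneg (Nat.cast_nonneg n) hF0
  -- global bound on u
  obtain ⟨M, hM0, hM⟩ : ∃ M, 0 ≤ M ∧ ∀ k, ∀ q ∈ KT, |u k q| ≤ M := by
    choose C hC using fun k => hKT.exists_bound_of_continuousOn (hu k)
    refine ⟨max 0 (Finset.univ.sup' ⟨i, Finset.mem_univ i⟩ C), le_max_left _ _, ?_⟩
    intro k q hq
    have := hC k q hq
    rw [Real.norm_eq_abs] at this
    exact this.trans (le_max_of_le_right (Finset.le_sup' C (Finset.mem_univ k)))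
  -- key estimate with ε
  have key : ∀ ε : ℝ, 0 < ε → ∀ k, ∀ q ∈ KT,
      |u k q| ≤ (U₀ + ε + (A + ε) * T) * Real.exp (K * T) := by
    intro ε hε
    set B : ℝ → ℝ := fun t => (U₀ + ε + (A + ε) * t) * Real.exp (K * t) with hBdef
    have hBc : Continuous B := by fun_prop
    have hB' : ∀ t : ℝ, HasDerivAt B ((A + ε) * Real.exp (K * t) + K * B t) t := by
      intro t
      have h1 : HasDerivAt (fun s : ℝ => U₀ + ε + (A + ε) * s) (A + ε) t := by
        simpa using ((hasDerivAt_id t).const_mul (A + ε)).const_add (U₀ + ε)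
      have h2 : HasDerivAt (fun s : ℝ => Real.exp (K * s)) (Real.exp (K * t) * (K * 1)) t :=
        ((hasDerivAt_id t).const_mul K).exp
      have := h1.mul h2
      convert this using 1
      case e'_9 =>
        show (A + ε) * Real.exp (K * t) + K * ((U₀ + ε + (A + ε) * t) * Real.exp (K * t)) = _
        ring
      all_goals rfl
    have hB'c : Continuous fun t => (A + ε) * Real.exp (K * t) + K * B t := by fun_prop
    have hB0 : B 0 = U₀ + ε := by simp [hBdef]
    have hBnn : ∀ t : ℝ, 0 ≤ t → 0 ≤ B t := by
      intro t ht
      have : (0:ℝ) ≤ U₀ + ε + (A + ε) * t := by positivity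
      exact mul_nonneg this (Real.exp_pos _).le
    have hBmono : ∀ s t : ℝ, 0 ≤ s → s ≤ t → B s ≤ B t := by
      intro s t hs hst
      have h1 : U₀ + ε + (A + ε) * s ≤ U₀ + ε + (A + ε) * t := by nlinarith
      have hc : 0 ≤ U₀ + ε + (A + ε) * s := by positivity
      have h2 : Real.exp (K * s) ≤ Real.exp (K * t) :=
        Real.exp_le_exp.2 (mul_le_mul_of_nonneg_left hst hK0)
      calc B s = (U₀ + ε + (A + ε) * s) * Real.exp (K * s) := rfl
        _ ≤ (U₀ + ε + (A + ε) * s) * Real.exp (K * t) := mul_le_mul_of_nonneg_left h2 hc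
        _ ≤ (U₀ + ε + (A + ε) * t) * Real.exp (K * t) :=
            mul_le_mul_of_nonneg_right h1 (Real.exp_pos _).le
    have hBU : ∀ t : ℝ, 0 ≤ t → U₀ ≤ B t := by
      intro t ht
      calc U₀ ≤ B 0 := by rw [hB0]; linarith
        _ ≤ B t := hBmono 0 t le_rfl ht
    have hintKB : ∀ s t : ℝ, IntervalIntegrable (fun τ => K * B τ + A) volume s t := by
      intro s t; exact (by fun_prop : Continuous fun τ => K * B τ + A).intervalIntegrable _ _
    -- integral comparison for the bound function
    have hIB : ∀ t : ℝ, 0 ≤ t →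
        (∫ τ in (0:ℝ)..t, (K * B τ + A)) ≤ B t - B 0 - ε * t := by
      intro t ht
      have h1 : (∫ τ in (0:ℝ)..t, (K * B τ + A)) ≤
          ∫ τ in (0:ℝ)..t, ((A + ε) * Real.exp (K * τ) + K * B τ - ε) := by
        refine intervalIntegral.integral_mono_on ht (hintKB 0 t)
          ((by fun_prop : Continuous fun τ => (A + ε) * Real.exp (K * τ) + K * B τ - ε).intervalIntegrable _ _) ?_
        intro τ hτ
        have h2 : (1:ℝ) ≤ Real.exp (K * τ) := Real.one_le_exp (mul_nonneg hK0 hτ.1)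
        nlinarith
      have h3 : (∫ τ in (0:ℝ)..t, ((A + ε) * Real.exp (K * τ) + K * B τ - ε))
          = (B t - B 0) - ε * t := by
        rw [intervalIntegral.integral_sub (hB'c.intervalIntegrable _ _)
          (intervalIntegrable_const)]
        rw [intervalIntegral.integral_eq_sub_of_hasDerivAt (fun τ _ => hB' τ)
          (hB'c.intervalIntegrable _ _)]
        simp [mul_comm]
      linarith
    -- bound on the integrand given bound on u at a given slice point
    have hGb : ∀ (k : Fin n) (x t τ Bd : ℝ), (γ k x t τ, τ) ∈ KT →
        (∀ j, |u j (γ k x t τ, τ)| ≤ Bd) → 0 ≤ Bd →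
        |(∑ j : Fin n, f k j (γ k x t τ, τ) * u j (γ k x t τ, τ)) + a k (γ k x t τ, τ)|
          ≤ K * Bd + A := by
      intro k x t τ Bd hmem hub hBd
      have h1 : |∑ j : Fin n, f k j (γ k x t τ, τ) * u j (γ k x t τ, τ)| ≤ K * Bd := by
        calc |∑ j : Fin n, f k j (γ k x t τ, τ) * u j (γ k x t τ, τ)|
            ≤ ∑ j : Fin n, |f k j (γ k x t τ, τ) * u j (γ k x t τ, τ)| :=
              Finset.abs_sum_le_sum_abs _ _
          _ ≤ ∑ _j : Fin n, F * Bd := by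
              refine Finset.sum_le_sum fun j _ => ?_
              rw [abs_mul]
              exact mul_le_mul (hF k j _ hmem) (hub j) (abs_nonneg _) hF0
          _ = K * Bd := by
              rw [Finset.sum_const, Finset.card_univ, Fintype.card_fin, nsmul_eq_mul]
              ring
      calc |(∑ j : Fin n, f k j (γ k x t τ, τ) * u j (γ k x t τ, τ)) + a k (γ k x t τ, τ)|
          ≤ |∑ j : Fin n, f k j (γ k x t τ, τ) * u j (γ k x t τ, τ)| + |a k (γ k x t τ, τ)| :=
            abs_add_le _ _
        _ ≤ K * Bd + A := add_le_add h1 (hA k _ hmem)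
    -- the self-improving estimate
    have est : ∀ s : ℝ, (∀ k, ∀ q ∈ KT, q.2 < s → |u k q| ≤ B q.2) →
        ∀ k, ∀ q ∈ KT, q.2 ≤ s → |u k q| ≤ B q.2 - ε * (1 + q.2) := by
      intro s hs k q hq hqs
      obtain ⟨x, t⟩ := q
      simp only at hqs ⊢
      have ht0' : 0 ≤ t := (hKTt _ hq).1
      rw [hrepr k x t hq]
      set G : ℝ → ℝ := fun τ =>
        (∑ j : Fin n, f k j (γ k x t τ, τ) * u j (γ k x t τ, τ)) + a k (γ k x t τ, τ) with hGdef
      have hae : ∀ᵐ τ ∂(volume.restrict (Set.uIoc (0:ℝ) t)), ‖G τ‖ ≤ K * B τ + A := by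
        have hne : ∀ᵐ τ : ℝ ∂(volume.restrict (Set.uIoc (0:ℝ) t)), τ ≠ t := by
          refine ae_restrict_of_ae ?_
          rw [MeasureTheory.ae_iff]
          have : {τ : ℝ | ¬ τ ≠ t} = {t} := by ext y; simp
          rw [this]
          exact measure_singleton t
        filter_upwards [hne, ae_restrict_mem measurableSet_uIoc] with τ hτne hτmem
        rw [Set.uIoc_of_le ht0'] at hτmem
        have hτt : τ < t := lt_of_le_of_ne hτmem.2 hτne
        have hmem : (γ k x t τ, τ) ∈ KT := hγ k x t τ hq hτmem.1.le hτt.le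
        have hub : ∀ j, |u j (γ k x t τ, τ)| ≤ B τ := fun j =>
          hs j _ hmem (lt_of_lt_of_le hτt hqs)
        rw [Real.norm_eq_abs]
        exact hGb k x t τ (B τ) hmem hub (hBnn τ hτmem.1.le)
      have h1 : |∫ τ in (0:ℝ)..t, G τ| ≤ |∫ τ in (0:ℝ)..t, (K * B τ + A)| := by
        refine le_trans ?_ (le_abs_self _)
        rw [← Real.norm_eq_abs]
        exact
          intervalIntegral.norm_integral_le_of_norm_le ht0'
            ((ae_restrict_iff' measurableSet_Ioc).1 (by rwa [Set.uIoc_of_le ht0'] at hae)) (hintKB 0 t)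
      have h2 : (∫ τ in (0:ℝ)..t, (K * B τ + A)) ≤ B t - B 0 - ε * t := hIB t ht0'
      have h2' : (0:ℝ) ≤ ∫ τ in (0:ℝ)..t, (K * B τ + A) := by
        apply intervalIntegral.integral_nonneg ht0'
        intro τ hτ
        have := hBnn τ hτ.1
        nlinarith
      have hu₀b : |u₀ k (γ k x t 0)| ≤ U₀ := hU₀ k _ (hγ k x t 0 hq le_rfl ht0')
      calc |u₀ k (γ k x t 0) + ∫ τ in (0:ℝ)..t, G τ|
          ≤ |u₀ k (γ k x t 0)| + |∫ τ in (0:ℝ)..t, G τ| := abs_add_le _ _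
        _ ≤ U₀ + (B t - B 0 - ε * t) := by
            have := abs_of_nonneg h2'
            refine add_le_add hu₀b (h1.trans ?_)
            rw [this]; exact h2
        _ = B t - ε * (1 + t) := by rw [hB0]; ring
    -- the set S
    set S : Set ℝ := {s | 0 ≤ s ∧ s ≤ T ∧ ∀ k, ∀ q ∈ KT, q.2 ≤ s → |u k q| ≤ B q.2} with hSdef
    have h0S : (0:ℝ) ∈ S := by
      refine ⟨le_rfl, hT.le, fun k q hq hq0 => ?_⟩
      have := est 0 (fun k q hq h => absurd h (not_lt.2 (hKTt q hq).1)) k q hq hq0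
      nlinarith [(hKTt q hq).1]
    have hbdd : BddAbove S := ⟨T, fun s hs => hs.2.1⟩
    have hSne : S.Nonempty := ⟨0, h0S⟩
    set t' := sSup S with ht'def
    have ht'0 : 0 ≤ t' := le_csSup hbdd h0S
    have ht'T : t' ≤ T := csSup_le hSne fun s hs => hs.2.1
    have hbelow : ∀ k, ∀ q ∈ KT, q.2 < t' → |u k q| ≤ B q.2 := by
      intro k q hq hlt
      obtain ⟨s, hsS, hlt'⟩ := exists_lt_of_lt_csSup hSne hlt
      exact hsS.2.2 k q hq hlt'.le
    have hstar := est t' hbelow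
    have ht'eq : t' = T := by
      by_contra hne
      have hlt : t' < T := lt_of_le_of_ne ht'T hne
      set δ : ℝ := min (T - t') (ε / (K * M + A + 1)) with hδdef
      have hδpos : 0 < δ := lt_min (by linarith) (div_pos hε (by positivity))
      have hδ1 : δ ≤ T - t' := min_le_left _ _
      have hδ2 : δ * (K * M + A) ≤ ε := by
        have h1 : δ ≤ ε / (K * M + A + 1) := min_le_right _ _
        have h2 : (0:ℝ) < K * M + A + 1 := by positivity
        have h3 : δ * (K * M + A + 1) ≤ ε := by
          rw [← le_div_iff₀ h2]; exact h1
        nlinarith [hδpos.le]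
      have hmem : t' + δ ∈ S := by
        refine ⟨by linarith, by linarith, ?_⟩
        intro k q hq hqle
        obtain ⟨x, t⟩ := q
        simp only at hqle ⊢
        have ht0' : 0 ≤ t := (hKTt _ hq).1
        by_cases hct : t ≤ t'
        · have := hstar k (x, t) hq hct
          simp only at this
          nlinarith
        · push_neg at hct
          rw [hrepr k x t hq]
          set G : ℝ → ℝ := fun τ =>
            (∑ j : Fin n, f k j (γ k x t τ, τ) * u j (γ k x t τ, τ)) + a k (γ k x t τ, τ)
            with hGdef
          have hu₀b : |u₀ k (γ k x t 0)| ≤ U₀ := hU₀ k _ (hγ k x t 0 hq le_rfl ht0')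
          by_cases hint : IntervalIntegrable G volume 0 t
          · have habs : IntervalIntegrable (fun τ => |G τ|) volume 0 t := by
              simpa [Real.norm_eq_abs] using hint.norm
            have hsub1 : Set.uIcc (0:ℝ) t' ⊆ Set.uIcc (0:ℝ) t := by
              rw [Set.uIcc_of_le ht0', Set.uIcc_of_le ht'0]
              exact Set.Icc_subset_Icc le_rfl hct.le
            have hsub2 : Set.uIcc t' t ⊆ Set.uIcc (0:ℝ) t := by
              rw [Set.uIcc_of_le ht0', Set.uIcc_of_le hct.le]
              exact Set.Icc_subset_Icc ht'0 le_rfl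
            have habs1 := habs.mono_set hsub1
            have habs2 := habs.mono_set hsub2
            have hsplit : (∫ τ in (0:ℝ)..t, |G τ|)
                = (∫ τ in (0:ℝ)..t', |G τ|) + ∫ τ in t'..t, |G τ| :=
              (intervalIntegral.integral_add_adjacent_intervals habs1 habs2).symm
            have hb1 : (∫ τ in (0:ℝ)..t', |G τ|) ≤ ∫ τ in (0:ℝ)..t', (K * B τ + A) := by
              refine intervalIntegral.integral_mono_on ht'0 habs1 (hintKB 0 t') ?_
              intro τ hτ
              have hmem' : (γ k x t τ, τ) ∈ KT := hγ k x t τ hq hτ.1 (hτ.2.trans hct.le)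
              have hub : ∀ j, |u j (γ k x t τ, τ)| ≤ B τ := by
                intro j
                have := hstar j _ hmem' hτ.2
                simp only at this
                nlinarith [hτ.1]
              exact hGb k x t τ (B τ) hmem' hub (hBnn τ hτ.1)
            have hb2 : (∫ τ in t'..t, |G τ|) ≤ ∫ τ in t'..t, (K * M + A) := by
              refine intervalIntegral.integral_mono_on hct.le habs2
                intervalIntegrable_const ?_
              intro τ hτ
              have hτ0 : 0 ≤ τ := ht'0.trans hτ.1
              have hmem' : (γ k x t τ, τ) ∈ KT := hγ k x t τ hq hτ0 hτ.2
              exact hGb k x t τ M hmem' (fun j => hM j _ hmem') hM0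
            have hb2' : (∫ τ in t'..t, (K * M + A)) = (t - t') * (K * M + A) := by
              rw [intervalIntegral.integral_const, smul_eq_mul]
            have hIb : |∫ τ in (0:ℝ)..t, G τ| ≤ ∫ τ in (0:ℝ)..t, |G τ| :=
              intervalIntegral.abs_integral_le_integral_abs ht0'
            have htt' : t - t' ≤ δ := by linarith
            have hKMA : (0:ℝ) ≤ K * M + A := by positivity
            have hfinal : (t - t') * (K * M + A) ≤ ε := by nlinarith
            calc |u₀ k (γ k x t 0) + ∫ τ in (0:ℝ)..t, G τ|
                ≤ |u₀ k (γ k x t 0)| + |∫ τ in (0:ℝ)..t, G τ| := abs_add_le _ _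
              _ ≤ U₀ + ((∫ τ in (0:ℝ)..t', |G τ|) + ∫ τ in t'..t, |G τ|) := by
                  rw [← hsplit]; exact add_le_add hu₀b hIb
              _ ≤ U₀ + ((B t' - B 0 - ε * t') + (t - t') * (K * M + A)) := by
                  refine add_le_add_right (add_le_add (hb1.trans (hIB t' ht'0))
                    (hb2.trans_eq hb2')) _
              _ ≤ B t' := by rw [hB0]; nlinarith
              _ ≤ B t := hBmono t' t ht'0 hct.le
          · rw [intervalIntegral.integral_undef hint, add_zero]
            exact hu₀b.trans (hBU t ht0')
      have : t' + δ ≤ t' := le_csSup hbdd hmem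
      linarith
    intro k q hq
    have hqT : q.2 ≤ t' := by rw [ht'eq]; exact (hKTt q hq).2
    have := hstar k q hq hqT
    have h2 : B q.2 ≤ B T := hBmono q.2 T (hKTt q hq).1 (hKTt q hq).2
    have h3 : 0 ≤ ε * (1 + q.2) := by nlinarith [(hKTt q hq).1]
    calc |u k q| ≤ B q.2 - ε * (1 + q.2) := this
      _ ≤ B T := by linarith
      _ = (U₀ + ε + (A + ε) * T) * Real.exp (K * T) := rfl
  -- conclude by letting ε → 0
  have hfin : ∀ ε' : ℝ, 0 < ε' → |u i p| ≤ (T * A + U₀) * Real.exp (↑n * F * T) + ε' := by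
    intro ε' hε'
    set c : ℝ := (1 + T) * Real.exp (K * T) with hcdef
    have hc : 0 < c := by positivity
    have := key (ε' / c) (div_pos hε' hc) i p hp
    have hcalc : (U₀ + ε' / c + (A + ε' / c) * T) * Real.exp (K * T)
        = (T * A + U₀) * Real.exp (K * T) + (ε' / c) * c := by
      rw [hcdef]; ring
    rw [hcalc, div_mul_cancel₀ _ hc.ne'] at this
    exact this
  exact le_of_forall_pos_le_add hfin
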